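/- For any connected graph G with vertex colouring ω from colour-set C and any target colour d in C, the minimum number of flooding moves required to make G monochromatic in colour d equals the minimum over all spanning trees T of G of the minimum number of flooding moves required to make T monochromatic in colour d. -/

import Mathlib

noncomputable section

variable {V C : Type*}

/-- The monochromatic component of `v`: vertices reachable from `v` through
vertices of the same colour. -/
def monoComp (G : SimpleGraph V) (ω : V → C) (v : V) : Set V :=
  {u | Relation.ReflTransGen (fun a b => G.Adj a b ∧ ω a = ω b) v u}

open Classical in
/-- Playing the single flood move `mv = (v, d)`: the monochromatic component of
`v` receives colour `d`. -/
def floodMove (G : SimpleGraph V) (ω : V → C) (mv : V × C) : V → C :=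
  fun u => if u ∈ monoComp G ω mv.1 then mv.2 else ω u

/-- Playing a sequence of flood moves. -/
def play (G : SimpleGraph V) : (V → C) → List (V × C) → (V → C)
  | ω, [] => ω
  | ω, mv :: S => play G (floodMove G ω mv) S

/-- A sequence `S` floods `G` with colour `d` if after playing it every vertex
has colour `d`. -/
def Floods (G : SimpleGraph V) (ω : V → C) (S : List (V × C)) (d : C) : Prop :=
  ∀ u, play G ω S u = d

/-- `m(G, ω, d)`: the minimum number of moves needed to make `G`
monochromatic in colour `d`. -/
def floodNum (G : SimpleGraph V) (ω : V → C) (d : C) : ℕ :=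
  sInf {k | ∃ S : List (V × C), S.length = k ∧ Floods G ω S d}

/-- `m(G, ω)`: the minimum number of moves needed to make `G` monochromatic. -/
def floodNumMin (G : SimpleGraph V) (ω : V → C) : ℕ :=
  sInf {k | ∃ (S : List (V × C)) (d : C), S.length = k ∧ Floods G ω S d}

open Classical in
/-- The subsequence of moves of `S` played in the vertex set `A`, viewed as
moves of the induced subgraph on `A`. -/
def restrictMoves (A : Set V) (S : List (V × C)) : List (↥A × C) :=
  S.filterMap (fun mv => if h : mv.1 ∈ A then some (⟨mv.1, h⟩, mv.2) else none)

/-- Moves of an induced subgraph on `A`, viewed as moves of the ambient graph. -/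
def liftMoves (A : Set V) (S : List (↥A × C)) : List (V × C) :=
  S.map (fun mv => ((mv.1 : V), mv.2))

end

noncomputable section FloodAux

open Relation

variable {V C : Type*} {G : SimpleGraph V} {ω a b : V → C}

lemma monoSymm (G : SimpleGraph V) (ω : V → C) :
    Symmetric (fun a b => G.Adj a b ∧ ω a = ω b) :=
  fun _ _ h => ⟨h.1.symm, h.2.symm⟩

lemma mem_monoComp_self (G : SimpleGraph V) (ω : V → C) (v : V) : v ∈ monoComp G ω v :=
  ReflTransGen.refl

lemma monoComp_color {v u : V} (h : u ∈ monoComp G ω v) : ω u = ω v := by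
  induction h with
  | refl => rfl
  | tail _ h ih => rw [← h.2, ih]

lemma monoComp_symm {v u : V} (h : u ∈ monoComp G ω v) : v ∈ monoComp G ω u :=
  by
  induction h with
  | refl => exact ReflTransGen.refl
  | tail _ hr ih => exact ReflTransGen.head ⟨hr.1.symm, hr.2.symm⟩ ih

lemma monoComp_trans {v u w : V} (h : u ∈ monoComp G ω v) (h2 : w ∈ monoComp G ω u) :
    w ∈ monoComp G ω v := ReflTransGen.trans h h2

lemma monoComp_congr {v u : V} (h : u ∈ monoComp G ω v) :
    monoComp G ω u = monoComp G ω v := by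
  ext z
  exact ⟨fun hz => monoComp_trans h hz, fun hz => monoComp_trans (monoComp_symm h) hz⟩

/-- transport along constancy of the new colouring on the old component -/
lemma monoComp_transport {ω' : V → C} {v u : V} (h : u ∈ monoComp G ω v)
    (hconst : ∀ z ∈ monoComp G ω v, ω' z = ω' v) : u ∈ monoComp G ω' v := by
  induction h with
  | refl => exact ReflTransGen.refl
  | @tail b c hb hr ih =>
      exact ReflTransGen.tail ih
        ⟨hr.1, by rw [hconst b hb, hconst c (ReflTransGen.tail hb hr)]⟩

/-- transport along agreement of the two colourings on the old component -/
lemma monoComp_transport' {ω' : V → C} {v u : V} (h : u ∈ monoComp G ω v)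
    (hagree : ∀ z ∈ monoComp G ω v, ω' z = ω z) : u ∈ monoComp G ω' v := by
  induction h with
  | refl => exact ReflTransGen.refl
  | @tail b c hb hr ih =>
      exact ReflTransGen.tail ih
        ⟨hr.1, by rw [hagree b hb, hagree c (ReflTransGen.tail hb hr), hr.2]⟩

lemma monoComp_mono {H : SimpleGraph V} (hHG : H ≤ G) {v u : V}
    (h : u ∈ monoComp H ω v) : u ∈ monoComp G ω v :=
  by
  induction h with
  | refl => exact ReflTransGen.refl
  | tail _ hr ih => exact ReflTransGen.tail ih ⟨hHG hr.1, hr.2⟩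

lemma floodMove_of_mem {mv : V × C} {u : V} (h : u ∈ monoComp G ω mv.1) :
    floodMove G ω mv u = mv.2 := by
  simp only [floodMove]
  exact if_pos h

lemma floodMove_of_not_mem {mv : V × C} {u : V} (h : u ∉ monoComp G ω mv.1) :
    floodMove G ω mv u = ω u := by
  simp only [floodMove]
  exact if_neg h

lemma play_append (G : SimpleGraph V) (ω : V → C) (S1 S2 : List (V × C)) :
    play G ω (S1 ++ S2) = play G (play G ω S1) S2 := by
  induction S1 generalizing ω with
  | nil => rfl
  | cons mv S ih => simp [play, ih]

lemma floods_nil {d : C} : Floods G ω [] d ↔ ∀ u, ω u = d := Iff.rfl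

lemma floods_cons {mv : V × C} {S : List (V × C)} {d : C} :
    Floods G ω (mv :: S) d ↔ Floods G (floodMove G ω mv) S d := Iff.rfl

end FloodAux

-- appended to partA context
section PartB
open Relation

variable {V C : Type*} {G : SimpleGraph V} {a b : V → C}

/-- the difference set of `a` and `b` is contained in a single `a`-monochromatic component -/
def Core (G : SimpleGraph V) (a b : V → C) : Prop :=
  ∃ v : V, ∀ u, a u ≠ b u → u ∈ monoComp G a v

lemma core_step [Nonempty V] (hC : Core G a b) (w : V) (x : C) :
    ∃ S : List (V × C), S.length ≤ 1 ∧
      Core G (play G a S) (floodMove G b (w, x)) := by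
  classical
  obtain ⟨v, hv⟩ := hC
  set b2 := floodMove G b (w, x) with hb2
  by_cases hE : ∀ u, a u = b u
  -- Case 1 : the boards are equal, copy the move
  · have hab : a = b := funext hE
    refine ⟨[(w, x)], by simp, ?_⟩
    subst hab
    exact ⟨w, fun u hu => absurd rfl hu⟩
  -- not equal
  by_cases h2 : ∃ p, p ∈ monoComp G b w ∧ a p ≠ b p
  -- Case 2 : the driver's component meets the difference set
  · obtain ⟨p, hpP, hpd⟩ := h2
    refine ⟨[(p, b w)], by simp, ?_⟩
    set a2 := floodMove G a (p, b w) with ha2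
    have hplay : play G a [(p, b w)] = a2 := rfl
    rw [hplay]
    -- A := monoComp G a p ; P := monoComp G b w
    -- facts
    have hpv : p ∈ monoComp G a v := hv p hpd
    have hdiffA : ∀ z, a z ≠ b z → z ∈ monoComp G a p := by
      intro z hz
      have := hv z hz
      rw [← monoComp_congr hpv] at this
      exact this
    have hbP : ∀ z ∈ monoComp G b w, b z = b w := fun z hz => monoComp_color hz
    -- a2 is constant (= b w) on A
    have ha2A : ∀ z ∈ monoComp G a p, a2 z = b w := by
      intro z hz
      exact floodMove_of_mem hz
    -- a2 is constant (= b w) on P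
    have ha2P : ∀ z ∈ monoComp G b w, a2 z = b w := by
      intro z hz
      by_cases hzA : z ∈ monoComp G a p
      · exact ha2A z hzA
      · have : a z = b z := by
          by_contra hne
          exact hzA (hdiffA z hne)
        rw [ha2, floodMove_of_not_mem hzA]
        rw [this]
        exact hbP z hz
    -- A ⊆ monoComp a2 p
    have hA2 : ∀ z ∈ monoComp G a p, z ∈ monoComp G a2 p := by
      intro z hz
      exact monoComp_transport hz
        (fun y hy => by rw [ha2A y hy, ha2A p (mem_monoComp_self G a p)])
    -- P ⊆ monoComp a2 p
    have hP2 : ∀ z ∈ monoComp G b w, z ∈ monoComp G a2 p := by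
      intro z hz
      have hzp : z ∈ monoComp G b p := by
        rw [monoComp_congr (ω := b) hpP]; exact hz
      have := monoComp_transport (ω := b) (ω' := a2) hzp
        (fun y hy => by
          have hyP : y ∈ monoComp G b w := by
            rw [← monoComp_congr (ω := b) hpP]; exact hy
          rw [ha2P y hyP, ha2P p hpP])
      exact this
    -- the new difference set is inside monoComp a2 p
    have hdiff2 : ∀ u, a2 u ≠ b2 u → u ∈ monoComp G a2 p := by
      intro u hu
      by_cases huP : u ∈ monoComp G b w
      · exact hP2 u huP
      by_cases huA : u ∈ monoComp G a p
      · exact hA2 u huA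
      · exfalso
        apply hu
        have h1 : a2 u = a u := floodMove_of_not_mem huA
        have h2 : b2 u = b u := floodMove_of_not_mem huP
        have h3 : a u = b u := by
          by_contra hne
          exact huA (hdiffA u hne)
        rw [h1, h2, h3]
    exact ⟨p, hdiff2⟩
  -- driver's component agrees
  push_neg at h2
  by_cases h3 : ∃ q, q ∈ monoComp G a w ∧ a q ≠ b q
  -- Case 3 : follower's component of w meets the difference: respond nothing
  · obtain ⟨q, hqAw, hqd⟩ := h3
    refine ⟨[], by simp, v, ?_⟩
    intro u hu
    show u ∈ monoComp G a v
    by_cases huP : u ∈ monoComp G b w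
    · -- u ∈ P ⊆ monoComp a w = class of q ⊆ class of v
      have huAw : u ∈ monoComp G a w :=
        monoComp_transport' huP (fun z hz => (h2 z hz))
      have hqv : q ∈ monoComp G a v := hv q hqd
      -- u ∈ comp a w, q ∈ comp a w → u ∈ comp a q
      have huq : u ∈ monoComp G a q := by
        rw [monoComp_congr (ω := a) hqAw]; exact huAw
      rw [← monoComp_congr (ω := a) hqv]; exact huq
    · have : b2 u = b u := floodMove_of_not_mem huP
      rw [this] at hu
      exact hv u hu
  -- Case 4 : neither meets the difference: copy the move
  · push_neg at h3
    refine ⟨[(w, x)], by simp, v, ?_⟩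
    set a2 := floodMove G a (w, x) with ha2
    have hPeq : monoComp G a w = monoComp G b w := by
      ext z
      constructor
      · intro hz
        exact monoComp_transport' (ω := a) (ω' := b) hz (fun y hy => (h3 y hy).symm)
      · intro hz
        exact monoComp_transport' (ω := b) (ω' := a) hz (fun y hy => (h2 y hy))
    have hplay : play G a [(w, x)] = a2 := rfl
    rw [hplay]
    intro u hu
    -- u ∉ P
    have huP : u ∉ monoComp G b w := by
      intro huP
      apply hu
      have h1 : a2 u = x := by
        apply floodMove_of_mem
        rw [hPeq]; exact huP
      have h2' : b2 u = x := floodMove_of_mem huP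
      rw [h1, h2']
    have huAw : u ∉ monoComp G a w := by rw [hPeq]; exact huP
    have h1 : a2 u = a u := floodMove_of_not_mem huAw
    have h2' : b2 u = b u := floodMove_of_not_mem huP
    rw [h1, h2'] at hu
    have huA : u ∈ monoComp G a v := hv u hu
    -- A and comp a w are disjoint
    have hdisj : ∀ z, z ∈ monoComp G a v → z ∉ monoComp G a w := by
      intro z hzv hzw
      -- then comp a v = comp a z = comp a w ∋ u, so a u = b u, contradiction
      have h4 : u ∈ monoComp G a z := by
        rw [monoComp_congr (ω := a) hzv]; exact huA
      have h5 : u ∈ monoComp G a w := by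
        rw [← monoComp_congr (ω := a) hzw]; exact h4
      exact huAw h5
    -- transport A
    exact monoComp_transport' (ω := a) (ω' := a2) huA
        (fun z hz => floodMove_of_not_mem (hdisj z hz))

end PartB

section PartB2
open Relation

variable {V C : Type*} {G : SimpleGraph V}

lemma core_main [Nonempty V] (d : C) :
    ∀ (S : List (V × C)) (b a : V → C), Core G a b → Floods G b S d →
      ∃ S' : List (V × C), S'.length ≤ S.length + 1 ∧ Floods G a S' d := by
  intro S
  induction S with
  | nil =>
      intro b a hC hF
      obtain ⟨v, hv⟩ := hC
      have hbd : ∀ u, b u = d := hF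
      by_cases ha : ∀ u, a u = d
      · exact ⟨[], by simp, ha⟩
      · push_neg at ha
        obtain ⟨u₀, hu₀⟩ := ha
        refine ⟨[(u₀, d)], by simp, ?_⟩
        intro u
        show floodMove G a (u₀, d) u = d
        by_cases hu : u ∈ monoComp G a (u₀, d).1
        · exact floodMove_of_mem hu
        · rw [floodMove_of_not_mem hu]
          by_contra hne
          apply hu
          have h1 : u ∈ monoComp G a v := hv u (by rw [hbd u]; exact hne)
          have h2 : u₀ ∈ monoComp G a v := hv u₀ (by rw [hbd u₀]; exact hu₀)
          show u ∈ monoComp G a u₀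
          rw [monoComp_congr (ω := a) h2]
          exact h1
  | cons mv S ih =>
      intro b a hC hF
      have hF' : Floods G (floodMove G b mv) S d := hF
      obtain ⟨S₀, hS₀len, hS₀core⟩ := core_step hC mv.1 mv.2
      obtain ⟨S'', hlen'', hfl''⟩ := ih (floodMove G b mv) (play G a S₀) hS₀core hF'
      refine ⟨S₀ ++ S'', ?_, ?_⟩
      · rw [List.length_append, List.length_cons]
        omega
      · intro u
        rw [play_append]
        exact hfl'' u

/-- monotonicity under spanning subgraphs: any flooding sequence for `H` can be
replaced by one of the same length for `G ⊇ H`. -/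
lemma sub_mono [Nonempty V] {H : SimpleGraph V} (hHG : H ≤ G) (d : C) :
    ∀ (S : List (V × C)) (ω : V → C), Floods H ω S d →
      ∃ S' : List (V × C), S'.length ≤ S.length ∧ Floods G ω S' d := by
  intro S
  induction S with
  | nil => exact fun ω h => ⟨[], le_refl _, h⟩
  | cons mv S ih =>
      intro ω hF
      have hF' : Floods H (floodMove H ω mv) S d := hF
      obtain ⟨R, hRlen, hRfl⟩ := ih (floodMove H ω mv) hF'
      have hCore : Core G ω (floodMove H ω mv) := by
        refine ⟨mv.1, fun u hu => ?_⟩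
        by_cases h : u ∈ monoComp H ω mv.1
        · exact monoComp_mono hHG h
        · rw [floodMove_of_not_mem h] at hu
          exact absurd rfl hu
      obtain ⟨S', hS'len, hS'fl⟩ := core_main d R (floodMove H ω mv) ω hCore hRfl
      exact ⟨S', by simp only [List.length_cons]; omega, hS'fl⟩

end PartB2

section PartD
open Relation SimpleGraph

variable {V C : Type*} {G : SimpleGraph V}

lemma monoComp_reachable {F : SimpleGraph V} {ω : V → C} {v u : V}
    (h : u ∈ monoComp F ω v) : F.Reachable v u := by
  induction h with
  | refl => rfl
  | tail _ h ih => exact ih.trans h.1.reachable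

lemma reachable_mem_monoComp {F : SimpleGraph V} {ω : V → C}
    (hmono : ∀ a b, F.Adj a b → ω a = ω b) {v u : V} (h : F.Reachable v u) :
    u ∈ monoComp F ω v := by
  obtain ⟨p⟩ := h
  induction p with
  | nil => exact ReflTransGen.refl
  | cons hadj p ih => exact ReflTransGen.head ⟨hadj, hmono _ _ hadj⟩ ih

lemma acyclic_sup_edge {F : SimpleGraph V} (hF : F.IsAcyclic) {y z : V}
    (hyz : y ≠ z) (hnr : ¬ F.Reachable y z) : (F ⊔ SimpleGraph.edge y z).IsAcyclic := by
  intro v c hc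
  by_cases he : s(y, z) ∈ c.edges
  · have := (SimpleGraph.adj_and_reachable_delete_edges_iff_exists_cycle
        (G := F ⊔ SimpleGraph.edge y z) (v := y) (w := z)).2 ⟨v, c, hc, he⟩
    apply hnr
    refine this.2.mono ?_
    intro a b hab
    replace hab : (F ⊔ SimpleGraph.edge y z).Adj a b ∧
        ¬ (SimpleGraph.fromEdgeSet {s(y, z)}).Adj a b := by
      rw [SimpleGraph.deleteEdges_adj] at hab
      exact ⟨hab.1, fun h => by rw [SimpleGraph.fromEdgeSet_adj] at h; exact hab.2 h.1⟩
    obtain ⟨h1, h2⟩ := hab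
    rcases h1 with h1 | h1
    · exact h1
    · exfalso
      rw [SimpleGraph.edge_adj] at h1
      apply h2
      rw [SimpleGraph.fromEdgeSet_adj]
      rcases h1.1 with ⟨rfl, rfl⟩ | ⟨rfl, rfl⟩
      · exact ⟨by simp, h1.2⟩
      · exact ⟨by rw [Sym2.eq_swap]; simp, h1.2⟩
  · have hsub : ∀ e ∈ c.edges, e ∈ F.edgeSet := by
      intro e hee
      have h1 : e ∈ (F ⊔ SimpleGraph.edge y z).edgeSet := c.edges_subset_edgeSet hee
      rw [SimpleGraph.edgeSet_sup] at h1
      rcases h1 with h1 | h1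
      · exact h1
      · rw [SimpleGraph.edge_edgeSet_of_ne hyz] at h1
        exact absurd (h1 ▸ hee) he
    exact hF (c.transfer F hsub) (hc.transfer hsub)

lemma exists_crossing {r : V → V → Prop} {P : V → Prop} {v z : V}
    (h : Relation.ReflTransGen r v z) (hv : P v) (hz : ¬ P z) :
    ∃ y z', Relation.ReflTransGen r v y ∧ r y z' ∧ P y ∧ ¬ P z' := by
  induction h with
  | refl => exact absurd hv hz
  | @tail b c hb hr ih =>
      by_cases hPb : P b
      · exact ⟨b, c, hb, hr, hPb, hz⟩
      · obtain ⟨y, z', h1, h2, h3, h4⟩ := ih hPb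
        exact ⟨y, z', h1, h2, h3, h4⟩

open Classical in
lemma forest_extend [Fintype V] (G : SimpleGraph V) (ω : V → C) (v : V) :
    ∀ (n : ℕ) (F : SimpleGraph V),
      (Finset.univ.filter (fun u =>
          u ∈ monoComp G ω v ∧ u ∉ monoComp F ω v)).card ≤ n →
      F ≤ G → F.IsAcyclic → (∀ a b, F.Adj a b → ω a = ω b) →
      ∃ F₁ : SimpleGraph V, F ≤ F₁ ∧ F₁ ≤ G ∧ F₁.IsAcyclic ∧
        (∀ a b, F₁.Adj a b → ω a = ω b) ∧
        (∀ u ∈ monoComp G ω v, u ∈ monoComp F₁ ω v) := by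
  classical
  intro n
  induction n with
  | zero =>
      intro F hcard hFG hFa hFm
      refine ⟨F, le_refl _, hFG, hFa, hFm, ?_⟩
      intro u hu
      by_contra hnu
      have : u ∈ Finset.univ.filter (fun u =>
          u ∈ monoComp G ω v ∧ u ∉ monoComp F ω v) := by
        simp [hu, hnu]
      have := Finset.card_pos.2 ⟨u, this⟩
      omega
  | succ n ih =>
      intro F hcard hFG hFa hFm
      by_cases hdone : ∀ u ∈ monoComp G ω v, u ∈ monoComp F ω v
      · exact ⟨F, le_refl _, hFG, hFa, hFm, hdone⟩
      push_neg at hdone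
      obtain ⟨z, hzK, hzM⟩ := hdone
      obtain ⟨y, z', hvy, hr, hyM, hz'M⟩ :=
        exists_crossing (P := fun u => u ∈ monoComp F ω v) hzK
          (mem_monoComp_self F ω v) hzM
      have hyz' : y ≠ z' := hr.1.ne
      have hz'K : z' ∈ monoComp G ω v := ReflTransGen.tail hvy hr
      -- z' is not F-reachable from y
      have hnr : ¬ F.Reachable y z' := by
        intro hre
        apply hz'M
        have h1 : z' ∈ monoComp F ω y := reachable_mem_monoComp hFm hre
        have h2 : monoComp F ω y = monoComp F ω v := monoComp_congr hyM
        rw [← h2]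
        exact h1
      set F₂ := F ⊔ SimpleGraph.edge y z' with hF₂
      have hle : F ≤ F₂ := le_sup_left
      have hF₂G : F₂ ≤ G := by
        refine sup_le hFG ?_
        intro a b hab
        rw [SimpleGraph.edge_adj] at hab
        rcases hab.1 with ⟨rfl, rfl⟩ | ⟨rfl, rfl⟩
        · exact hr.1
        · exact hr.1.symm
      have hF₂a : F₂.IsAcyclic := acyclic_sup_edge hFa hyz' hnr
      have hF₂m : ∀ a b, F₂.Adj a b → ω a = ω b := by
        intro a b hab
        rcases hab with hab | hab
        · exact hFm a b hab
        · rw [SimpleGraph.edge_adj] at hab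
          rcases hab.1 with ⟨rfl, rfl⟩ | ⟨rfl, rfl⟩
          · exact hr.2
          · exact hr.2.symm
      -- monoComp F ω v ⊆ monoComp F₂ ω v and z' joins
      have hMsub : ∀ u, u ∈ monoComp F ω v → u ∈ monoComp F₂ ω v :=
        fun u hu => monoComp_mono hle hu
      have hz'M₂ : z' ∈ monoComp F₂ ω v := by
        refine ReflTransGen.tail (hMsub y hyM) ?_
        exact ⟨Or.inr (by rw [SimpleGraph.edge_adj]; exact ⟨Or.inl ⟨rfl, rfl⟩, hyz'⟩), hr.2⟩
      have hcard₂ : (Finset.univ.filter (fun u =>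
          u ∈ monoComp G ω v ∧ u ∉ monoComp F₂ ω v)).card ≤ n := by
        have hss : (Finset.univ.filter (fun u =>
            u ∈ monoComp G ω v ∧ u ∉ monoComp F₂ ω v)) ⊂
            (Finset.univ.filter (fun u =>
            u ∈ monoComp G ω v ∧ u ∉ monoComp F ω v)) := by
          refine Finset.ssubset_iff_of_subset ?_ |>.2 ?_
          · intro u hu
            simp only [Finset.mem_filter, Finset.mem_univ, true_and] at hu ⊢
            exact ⟨hu.1, fun hm => hu.2 (hMsub u hm)⟩
          · exact ⟨z', by simp [hz'K, hz'M], by simp [hz'M₂]⟩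
        have := Finset.card_lt_card hss
        omega
      obtain ⟨F₁, h1, h2, h3, h4, h5⟩ := ih F₂ hcard₂ hF₂G hF₂a hF₂m
      exact ⟨F₁, le_trans hle h1, h2, h3, h4, h5⟩

lemma tree_exists [Fintype V] (G : SimpleGraph V) (hG : G.Connected) (d : C) :
    ∀ (S : List (V × C)) (ω : V → C) (F : SimpleGraph V),
      F ≤ G → F.IsAcyclic → (∀ a b, F.Adj a b → ω a = ω b) →
      Floods G ω S d →
      ∃ T : SimpleGraph V, F ≤ T ∧ T ≤ G ∧ T.IsTree ∧ Floods T ω S d := by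
  classical
  intro S
  induction S with
  | nil =>
      intro ω F hFG hFa hFm hfl
      have hωd : ∀ u, ω u = d := hfl
      obtain ⟨v₀⟩ := hG.nonempty
      have hK : ∀ u, u ∈ monoComp G ω v₀ := by
        intro u
        exact reachable_mem_monoComp (fun a b _ => by rw [hωd a, hωd b]) (hG v₀ u)
      obtain ⟨F₁, hle, hF₁G, hF₁a, _, hF₁K⟩ :=
        forest_extend G ω v₀ _ F (le_refl _) hFG hFa hFm
      refine ⟨F₁, hle, hF₁G, ⟨?_, hF₁a⟩, hfl⟩
      rw [SimpleGraph.connected_iff]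
      refine ⟨?_, ⟨v₀⟩⟩
      intro u w
      exact ((monoComp_reachable (hF₁K u (hK u))).symm).trans
        (monoComp_reachable (hF₁K w (hK w)))
  | cons mv S ih =>
      intro ω F hFG hFa hFm hfl
      obtain ⟨F₁, hle, hF₁G, hF₁a, hF₁m, hF₁K⟩ :=
        forest_extend G ω mv.1 _ F (le_refl _) hFG hFa hFm
      set ω' := floodMove G ω mv with hω'
      have hfl' : Floods G ω' S d := hfl
      -- ω'-monochromaticity of F₁ edges
      have hF₁m' : ∀ a b, F₁.Adj a b → ω' a = ω' b := by
        intro a b hab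
        have hab' : ω a = ω b := hF₁m a b hab
        by_cases haK : a ∈ monoComp G ω mv.1
        · have hbK : b ∈ monoComp G ω mv.1 :=
            ReflTransGen.tail haK ⟨hF₁G hab, hab'⟩
          rw [hω', floodMove_of_mem haK, floodMove_of_mem hbK]
        · have hbK : b ∉ monoComp G ω mv.1 := by
            intro hbK
            exact haK (ReflTransGen.tail hbK ⟨(hF₁G hab).symm, hab'.symm⟩)
          rw [hω', floodMove_of_not_mem haK, floodMove_of_not_mem hbK]
          exact hab'
      obtain ⟨T, hleT, hTG, hTtree, hTfl⟩ := ih ω' F₁ hF₁G hF₁a hF₁m' hfl'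
      refine ⟨T, le_trans hle hleT, hTG, hTtree, ?_⟩
      -- flooding: floodMove T ω mv = ω'
      have hcompeq : monoComp T ω mv.1 = monoComp G ω mv.1 := by
        ext u
        constructor
        · exact fun hu => monoComp_mono hTG hu
        · exact fun hu => monoComp_mono hleT (hF₁K u hu)
      have hmoveeq : floodMove T ω mv = ω' := by
        funext u
        by_cases hu : u ∈ monoComp G ω mv.1
        · rw [floodMove_of_mem (by rw [hcompeq]; exact hu), hω',
            floodMove_of_mem hu]
        · rw [floodMove_of_not_mem (by rw [hcompeq]; exact hu), hω',
            floodMove_of_not_mem hu]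
      show Floods T (floodMove T ω mv) S d
      rw [hmoveeq]
      exact hTfl

end PartD

section PartE
open Relation

variable {V C : Type*} {G : SimpleGraph V}

lemma play_d_stable (G : SimpleGraph V) (d : C) :
    ∀ (S : List (V × C)) (ω : V → C), (∀ mv ∈ S, mv.2 = d) → ω u = d →
      play G ω S u = d := by
  intro S
  induction S with
  | nil => exact fun ω _ h => h
  | cons mv S ih =>
      intro ω hS hu
      show play G (floodMove G ω mv) S u = d
      refine ih (floodMove G ω mv) (fun m hm => hS m (List.mem_cons_of_mem _ hm)) ?_
      by_cases h : u ∈ monoComp G ω mv.1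
      · rw [floodMove_of_mem h]
        exact hS mv (List.mem_cons_self)
      · rw [floodMove_of_not_mem h]
        exact hu

lemma play_pivot_d (G : SimpleGraph V) (d : C) :
    ∀ (S : List (V × C)) (ω : V → C), (∀ mv ∈ S, mv.2 = d) → (u, d) ∈ S →
      play G ω S u = d := by
  intro S
  induction S with
  | nil => intro ω _ h; cases h
  | cons mv S ih =>
      intro ω hS hmem
      rcases List.mem_cons.1 hmem with h | h
      · show play G (floodMove G ω mv) S u = d
        refine play_d_stable G d S _ (fun m hm => hS m (List.mem_cons_of_mem _ hm)) ?_
        rw [← h]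
        exact floodMove_of_mem (mem_monoComp_self G ω _)
      · exact ih (floodMove G ω mv) (fun m hm => hS m (List.mem_cons_of_mem _ hm)) h

lemma exists_floods [Fintype V] (G : SimpleGraph V) (ω : V → C) (d : C) :
    ∃ S : List (V × C), Floods G ω S d := by
  classical
  refine ⟨Finset.univ.toList.map (fun v => (v, d)), ?_⟩
  intro u
  refine play_pivot_d G d _ ω ?_ ?_
  · intro mv hmv
    obtain ⟨v, _, rfl⟩ := List.mem_map.1 hmv
    rfl
  · exact List.mem_map.2 ⟨u, by simp, rfl⟩

lemma floodNum_le {ω : V → C} {d : C} {S : List (V × C)} (h : Floods G ω S d) :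
    floodNum G ω d ≤ S.length :=
  Nat.sInf_le ⟨S, rfl, h⟩

lemma exists_optimal [Fintype V] (G : SimpleGraph V) (ω : V → C) (d : C) :
    ∃ S : List (V × C), S.length = floodNum G ω d ∧ Floods G ω S d := by
  have hne : {k | ∃ S : List (V × C), S.length = k ∧ Floods G ω S d}.Nonempty := by
    obtain ⟨S, hS⟩ := exists_floods G ω d
    exact ⟨S.length, S, rfl, hS⟩
  exact Nat.sInf_mem hne

end PartE


/-- the minimum number of moves to flood a connected graph `G`
with colour `d` equals the minimum over all spanning trees `T` of `G` of the
number of moves needed to flood `T` with colour `d`. -/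
theorem stmt0 {V C : Type*} [Fintype V] (G : SimpleGraph V) (hG : G.Connected)
    (ω : V → C) (d : C) :
    floodNum G ω d =
      sInf {k | ∃ T : SimpleGraph V, T ≤ G ∧ T.IsTree ∧ floodNum T ω d = k} := by
  classical
  have hne : Nonempty V := hG.nonempty
  -- the spanning tree provided by the optimal sequence for G
  obtain ⟨S, hSlen, hSfl⟩ := exists_optimal G ω d
  obtain ⟨T₀, _, hT₀G, hT₀tree, hT₀fl⟩ :=
    tree_exists G hG d S ω ⊥ bot_le SimpleGraph.isAcyclic_bot (by simp) hSfl
  apply le_antisymm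
  · refine le_csInf ⟨floodNum T₀ ω d, T₀, hT₀G, hT₀tree, rfl⟩ ?_
    rintro k ⟨T, hTG, hTtree, rfl⟩
    obtain ⟨S_T, hlen, hfl⟩ := exists_optimal T ω d
    obtain ⟨S', hle, hfl'⟩ := sub_mono hTG d S_T ω hfl
    calc floodNum G ω d ≤ S'.length := floodNum_le hfl'
      _ ≤ S_T.length := hle
      _ = floodNum T ω d := hlen
  · have h1 : floodNum T₀ ω d ≤ S.length := floodNum_le hT₀fl
    have h2 : sInf {k | ∃ T : SimpleGraph V, T ≤ G ∧ T.IsTree ∧ floodNum T ω d = k}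
        ≤ floodNum T₀ ω d := Nat.sInf_le ⟨T₀, hT₀G, hT₀tree, rfl⟩
    omega
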